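/- Let ρ ∈ (0, 1/2) and set σ = 1 − (1−ρ)⁴ − (1−ρ)³ρ, τ = 1 − (1−ρ)⁴ − 2(1−ρ)³ρ, and x̂ = (1 − (1−ρ)⁴)/(2(1−ρ)³ρ). Define Y ⊂ ℝ as the set of all numbers of the form γ·( (1−ρ)⁴·μ₁·(−2) + (1−ρ)³ρ·μ₂·(−1) + (1−ρ)³ρ·μ₃·(−1) ) where γ ∈ [1/(2x̂ − 1), 1/(x̂ − 1)], μ₁, μ₂, μ₃ ∈ [0,1] satisfy (1−ρ)⁴·μ₁·(1 − 2x̂) + (1−ρ)³ρ·(μ₂ + μ₃)·(1 − x̂) + τ = 0, and additionally μ₁ = 0 if γ(1 − 2x̂) + 1 < 0, μ₁ = 1 if γ(1 − 2x̂) + 1 > 0, and for j = 2, 3: μⱼ = 0 if γ(1 − x̂) + 1 < 0 and μⱼ = 1 if γ(1 − x̂) + 1 > 0. Then Y equals the closed interval [−2σ/(2x̂ − 1)², −τ/(x̂ − 1)²]. -/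

import Mathlib

set_option maxHeartbeats 1000000 in
lemma network_aux (a b τ σ x : ℝ) (ha : 0 < a) (hb : 0 < b)
    (hσ : σ = 1 - a - b) (hτ : τ = 1 - a - 2 * b)
    (hx : 2 * b * x = 1 - a) (hτpos : 0 < τ)
    (Y : Set ℝ)
    (hY : Y = {y : ℝ | ∃ γ μ₁ μ₂ μ₃ : ℝ,
      γ ∈ Set.Icc (1 / (2 * x - 1)) (1 / (x - 1)) ∧
      μ₁ ∈ Set.Icc (0 : ℝ) 1 ∧ μ₂ ∈ Set.Icc (0 : ℝ) 1 ∧ μ₃ ∈ Set.Icc (0 : ℝ) 1 ∧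
      a * μ₁ * (1 - 2 * x)
        + b * (μ₂ + μ₃) * (1 - x) + τ = 0 ∧
      (γ * (1 - 2 * x) + 1 < 0 → μ₁ = 0) ∧
      (0 < γ * (1 - 2 * x) + 1 → μ₁ = 1) ∧
      (γ * (1 - x) + 1 < 0 → μ₂ = 0) ∧
      (0 < γ * (1 - x) + 1 → μ₂ = 1) ∧
      (γ * (1 - x) + 1 < 0 → μ₃ = 0) ∧
      (0 < γ * (1 - x) + 1 → μ₃ = 1) ∧
      y = γ * (a * μ₁ * (-2) + b * μ₂ * (-1)
        + b * μ₃ * (-1))}) :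
    Y = Set.uIcc (-(2 * σ) / (2 * x - 1) ^ 2) (-τ / (x - 1) ^ 2) := by
  have hxm1 : 2 * b * (x - 1) = τ := by linear_combination hx - hτ
  have hσ' : b * (2 * x - 1) = σ := by linear_combination hx - hσ
  have hx1 : 1 < x := by nlinarith
  have hx1p : 0 < x - 1 := by linarith
  have h2xp : 0 < 2 * x - 1 := by linarith
  have h2b : (0 : ℝ) < 2 * b := by linarith
  have hgl : (0 : ℝ) < 1 / (2 * x - 1) := by positivity
  have e1 : -(2 * σ) / (2 * x - 1) ^ 2 = -(2 * b) / (2 * x - 1) := by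
    rw [← hσ']; field_simp
  have e2 : -τ / (x - 1) ^ 2 = -(2 * b) / (x - 1) := by
    rw [← hxm1]; field_simp
  have horder : -(2 * b) / (x - 1) ≤ -(2 * b) / (2 * x - 1) := by
    rw [div_le_div_iff₀ hx1p h2xp]; nlinarith [mul_pos hb hx1p]
  rw [e1, e2, Set.uIcc_of_ge horder, hY]
  clear hY
  ext y
  simp only [Set.mem_setOf_eq, Set.mem_Icc]
  constructor
  · rintro ⟨γ, μ₁, μ₂, μ₃, ⟨hγl, hγr⟩, ⟨hμ₁0, hμ₁1⟩, ⟨hμ₂0, hμ₂1⟩, ⟨hμ₃0, hμ₃1⟩,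
      hcon, h1n, h1p, h2n, h2p, h3n, h3p, hyeq⟩
    have hγl' : 1 ≤ γ * (2 * x - 1) := (div_le_iff₀ h2xp).mp hγl
    have hγr' : γ * (x - 1) ≤ 1 := by
      rw [le_div_iff₀ hx1p] at hγr; exact hγr
    have hγpos : 0 < γ := lt_of_lt_of_le hgl hγl
    have hxpos : (0 : ℝ) < x := by linarith
    have hval : μ₁ = 0 ∧ μ₂ = 1 ∧ μ₃ = 1 := by
      rcases eq_or_lt_of_le hγl' with h1e | h1l
      · -- γ * (2x-1) = 1
        have hx2lt : γ * (x - 1) < 1 := by nlinarith [mul_pos hγpos hxpos]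
        have hμ2 : μ₂ = 1 := h2p (by nlinarith)
        have hμ3 : μ₃ = 1 := h3p (by nlinarith)
        have hμ1 : μ₁ = 0 := by
          rw [hμ2, hμ3] at hcon
          have key : μ₁ * (a * (2 * x - 1)) = 0 := by
            linear_combination -hcon - hxm1
          rcases mul_eq_zero.mp key with h | h
          · exact h
          · exact absurd h (ne_of_gt (mul_pos ha h2xp))
        exact ⟨hμ1, hμ2, hμ3⟩
      · have hneg : γ * (1 - 2 * x) + 1 < 0 := by
          have e : γ * (1 - 2 * x) + 1 = 1 - γ * (2 * x - 1) := by ring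
          linarith
        have hμ1 : μ₁ = 0 := h1n hneg
        rcases eq_or_lt_of_le hγr' with h2e | h2l
        · rw [hμ1] at hcon
          have key : (μ₂ + μ₃ - 2) * (b * (x - 1)) = 0 := by
            linear_combination -hcon - hxm1
          have hs : μ₂ + μ₃ = 2 := by
            rcases mul_eq_zero.mp key with h | h
            · linarith
            · exfalso; nlinarith [mul_pos hb hx1p]
          exact ⟨hμ1, by linarith, by linarith⟩
        · have hpos2 : 0 < γ * (1 - x) + 1 := by
            have e : γ * (1 - x) + 1 = 1 - γ * (x - 1) := by ring
            linarith
          exact ⟨hμ1, h2p hpos2, h3p hpos2⟩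
    rw [hval.1, hval.2.1, hval.2.2] at hyeq
    have hyeq' : y = -(2 * b) * γ := by rw [hyeq]; ring
    constructor
    · rw [hyeq', div_le_iff₀ hx1p]; nlinarith
    · rw [hyeq', le_div_iff₀ h2xp]; nlinarith
  · rintro ⟨hylo, hyhi⟩
    have hkey1 : -(2 * b) ≤ y * (x - 1) := by
      rw [div_le_iff₀ hx1p] at hylo; exact hylo
    have hkey2 : y * (2 * x - 1) ≤ -(2 * b) := by
      rw [le_div_iff₀ h2xp] at hyhi; exact hyhi
    refine ⟨-(y / (2 * b)), 0, 1, 1, ⟨?_, ?_⟩, ⟨le_refl _, zero_le_one⟩,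
      ⟨zero_le_one, le_refl _⟩, ⟨zero_le_one, le_refl _⟩, ?_,
      fun _ => rfl, ?_, ?_, fun _ => rfl, ?_, fun _ => rfl, ?_⟩
    · rw [div_le_iff₀ h2xp]
      have e : -(y / (2 * b)) * (2 * x - 1) = -(y * (2 * x - 1)) / (2 * b) := by ring
      rw [e, le_div_iff₀ h2b]; linarith
    · rw [le_div_iff₀ hx1p]
      have e : -(y / (2 * b)) * (x - 1) = -(y * (x - 1)) / (2 * b) := by ring
      rw [e, div_le_iff₀ h2b]; linarith
    · linear_combination -hxm1
    · intro h; exfalso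
      have e : -(y / (2 * b)) * (1 - 2 * x) + 1 = (y * (2 * x - 1) + 2 * b) / (2 * b) := by
        field_simp; ring
      rw [e, lt_div_iff₀ h2b] at h; linarith
    · intro h; exfalso
      have e : -(y / (2 * b)) * (1 - x) + 1 = (y * (x - 1) + 2 * b) / (2 * b) := by
        field_simp; ring
      rw [e, div_lt_iff₀ h2b] at h; linarith
    · intro h; exfalso
      have e : -(y / (2 * b)) * (1 - x) + 1 = (y * (x - 1) + 2 * b) / (2 * b) := by
        field_simp; ring
      rw [e, div_lt_iff₀ h2b] at h; linarith
    · field_simp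
      ring

/-- For the four-component network example with component failure
probability `ρ ∈ (0, 1/2)`, `σ = 1 − (1−ρ)⁴ − (1−ρ)³ρ`,
`τ = 1 − (1−ρ)⁴ − 2(1−ρ)³ρ` and `xhat = (1 − (1−ρ)⁴)/(2(1−ρ)³ρ)`, the set `Y`
of candidate subgradients produced by the multiplier conditions of Theorem 1
equals the closed interval with endpoints `−2σ/(2xhat − 1)²` and
`−τ/(xhat − 1)²` (the convex hull of the two one-sided derivatives). -/
theorem network_candidate_subgradient_set
    (ρ σ τ xhat : ℝ) (hρ : ρ ∈ Set.Ioo (0 : ℝ) (1 / 2))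
    (hσ : σ = 1 - (1 - ρ) ^ 4 - (1 - ρ) ^ 3 * ρ)
    (hτ : τ = 1 - (1 - ρ) ^ 4 - 2 * (1 - ρ) ^ 3 * ρ)
    (hxhat : xhat = (1 - (1 - ρ) ^ 4) / (2 * (1 - ρ) ^ 3 * ρ))
    (Y : Set ℝ)
    (hY : Y = {y : ℝ | ∃ γ μ₁ μ₂ μ₃ : ℝ,
      γ ∈ Set.Icc (1 / (2 * xhat - 1)) (1 / (xhat - 1)) ∧
      μ₁ ∈ Set.Icc (0 : ℝ) 1 ∧ μ₂ ∈ Set.Icc (0 : ℝ) 1 ∧ μ₃ ∈ Set.Icc (0 : ℝ) 1 ∧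
      (1 - ρ) ^ 4 * μ₁ * (1 - 2 * xhat)
        + (1 - ρ) ^ 3 * ρ * (μ₂ + μ₃) * (1 - xhat) + τ = 0 ∧
      (γ * (1 - 2 * xhat) + 1 < 0 → μ₁ = 0) ∧
      (0 < γ * (1 - 2 * xhat) + 1 → μ₁ = 1) ∧
      (γ * (1 - xhat) + 1 < 0 → μ₂ = 0) ∧
      (0 < γ * (1 - xhat) + 1 → μ₂ = 1) ∧
      (γ * (1 - xhat) + 1 < 0 → μ₃ = 0) ∧
      (0 < γ * (1 - xhat) + 1 → μ₃ = 1) ∧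
      y = γ * ((1 - ρ) ^ 4 * μ₁ * (-2) + (1 - ρ) ^ 3 * ρ * μ₂ * (-1)
        + (1 - ρ) ^ 3 * ρ * μ₃ * (-1))}) :
    Y = Set.uIcc (-(2 * σ) / (2 * xhat - 1) ^ 2) (-τ / (xhat - 1) ^ 2) := by
  obtain ⟨hρ0, hρ1⟩ := hρ
  have hu : 0 < 1 - ρ := by linarith
  have ha : 0 < (1 - ρ) ^ 4 := by positivity
  have hb : 0 < (1 - ρ) ^ 3 * ρ := by positivity
  have hτpos : 0 < τ := by
    have h : τ = ρ * (1 + (1 - ρ) + (1 - ρ) ^ 2 * ρ) := by rw [hτ]; ring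
    rw [h]
    apply mul_pos hρ0
    nlinarith [sq_nonneg (1 - ρ)]
  have hx : 2 * ((1 - ρ) ^ 3 * ρ) * xhat = 1 - (1 - ρ) ^ 4 := by
    rw [hxhat]
    field_simp
  exact network_aux ((1 - ρ) ^ 4) ((1 - ρ) ^ 3 * ρ) τ σ xhat ha hb
    (by rw [hσ]) (by rw [hτ]; ring) hx hτpos Y hY
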